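/- There exist δ > 0 and N such that for all n ≥ N and all integers k with (1−δ)·2log₂n ≤ k ≤ (1+δ)·2log₂n: (1) for every integer i with 2 ≤ i ≤ 2k/3, f_i ≤ f(k)²·n^{−0.3i}; and (2) for every integer i = k−j with 1 ≤ j ≤ k/3, f_i ≤ f(k)·n^{−0.3j}. Consequently, for every ε > 0 and constant c0 > 0 there is N' such that for all n ≥ N' and such k with f(k) ≥ c0, the sum Σ_{i=2}^{k−1} f_i ≤ ε·f(k)², and hence the number X of independent sets of size k in G(n,1/2) satisfies Var(X) ≤ E(X) + ε·E(X)². -/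

import Mathlib

open MeasureTheory ProbabilityTheory Filter Real
open scoped ENNReal NNReal

namespace RandomBipartiteDecomposition

/-- The set of edges of the complete bipartite graph with vertex classes `A` and `B`. -/
def bicliqueEdges {V : Type*} (A B : Finset V) : Set (Sym2 V) :=
  {e | ∃ a ∈ A, ∃ b ∈ B, e = s(a, b)}

/-- `A`, `B` are the vertex classes of a complete bipartite subgraph of `G`. -/
def IsBicliqueIn {V : Type*} (G : SimpleGraph V) (A B : Finset V) : Prop :=
  A.Nonempty ∧ B.Nonempty ∧ Disjoint A B ∧ ∀ a ∈ A, ∀ b ∈ B, G.Adj a b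

/-- A complete bipartite subgraph is nontrivial if both classes have at least 2 vertices. -/
def IsNontrivialBicliqueIn {V : Type*} (G : SimpleGraph V) (A B : Finset V) : Prop :=
  2 ≤ A.card ∧ 2 ≤ B.card ∧ Disjoint A B ∧ ∀ a ∈ A, ∀ b ∈ B, G.Adj a b

/-- `P` lists `m` pairwise edge-disjoint complete bipartite subgraphs of `G` such that
every edge of `G` belongs to exactly one of them. -/
def IsBicliqueDecomp {V : Type*} (G : SimpleGraph V) (m : ℕ)
    (P : Fin m → Finset V × Finset V) : Prop :=
  (∀ i, IsBicliqueIn G (P i).1 (P i).2) ∧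
  (∀ i j, i ≠ j →
    Disjoint (bicliqueEdges (P i).1 (P i).2) (bicliqueEdges (P j).1 (P j).2)) ∧
  (⋃ i, bicliqueEdges (P i).1 (P i).2) = G.edgeSet

/-- As above but with all complete bipartite subgraphs nontrivial. -/
def IsNontrivialBicliqueDecomp {V : Type*} (G : SimpleGraph V) (m : ℕ)
    (P : Fin m → Finset V × Finset V) : Prop :=
  (∀ i, IsNontrivialBicliqueIn G (P i).1 (P i).2) ∧
  (∀ i j, i ≠ j →
    Disjoint (bicliqueEdges (P i).1 (P i).2) (bicliqueEdges (P j).1 (P j).2)) ∧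
  (⋃ i, bicliqueEdges (P i).1 (P i).2) = G.edgeSet

/-- `τ(G)`: the minimum number of pairwise edge-disjoint complete bipartite subgraphs
of `G` so that each edge of `G` belongs to exactly one of them. -/
noncomputable def tau {V : Type*} (G : SimpleGraph V) : ℕ :=
  sInf {m | ∃ P : Fin m → Finset V × Finset V, IsBicliqueDecomp G m P}

/-- `τ'(G)`: the minimum number of pairwise edge-disjoint *nontrivial* complete bipartite
subgraphs of `G` covering all edges of `G`; `⊤` if there is no such cover. -/
noncomputable def tau' {V : Type*} (G : SimpleGraph V) : ℕ∞ :=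
  sInf {t : ℕ∞ | ∃ m : ℕ, t = m ∧ ∃ P : Fin m → Finset V × Finset V,
    IsNontrivialBicliqueDecomp G m P}

/-- `S` is an independent set of `G`. -/
def IsIndepFinset {V : Type*} (G : SimpleGraph V) (S : Finset V) : Prop :=
  ∀ a ∈ S, ∀ b ∈ S, ¬ G.Adj a b

/-- `α(G)`: the maximum size of an independent set of `G`. -/
noncomputable def alpha {V : Type*} (G : SimpleGraph V) : ℕ :=
  sSup {k | ∃ S : Finset V, S.card = k ∧ IsIndepFinset G S}

/-- `S` induces in `G` a complete bipartite graph with nonempty vertex classes `A`, `B`. -/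
def IsInducedCompleteBipartite {V : Type*} (G : SimpleGraph V) (S A B : Finset V) : Prop :=
  A.Nonempty ∧ B.Nonempty ∧ Disjoint A B ∧ (A : Set V) ∪ (B : Set V) = (S : Set V) ∧
  ∀ u ∈ S, ∀ v ∈ S, (G.Adj u v ↔ ((u ∈ A ∧ v ∈ B) ∨ (u ∈ B ∧ v ∈ A)))

/-- `β(G)`: the largest number of vertices of an induced complete bipartite subgraph. -/
noncomputable def beta {V : Type*} (G : SimpleGraph V) : ℕ :=
  sSup {k | ∃ S A B : Finset V, IsInducedCompleteBipartite G S A B ∧ S.card = k}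

/-- The Bernoulli measure on `Bool` giving `true` probability `p`. -/
noncomputable def bernoulliBool (p : ℝ) : Measure Bool :=
  p.toNNReal • Measure.dirac true + (1 - p).toNNReal • Measure.dirac false

instance (p : ℝ) : IsFiniteMeasure (bernoulliBool p) := by
  unfold bernoulliBool; infer_instance

/-- The Erdős–Rényi random graph `G(n,p)`: each unordered pair of vertices flips an
independent `p`-coin. Events about the graph are subsets of the coin-flip space. -/
noncomputable def erdosRenyi (n : ℕ) (p : ℝ) : Measure (Sym2 (Fin n) → Bool) :=
  Measure.pi fun _ => bernoulliBool p

/-- The simple graph determined by the coin flips `ω`. -/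
def graphOf (n : ℕ) (ω : Sym2 (Fin n) → Bool) : SimpleGraph (Fin n) :=
  SimpleGraph.fromEdgeSet {e | ω e = true}

/-- `f(k) = C(n,k) · 2^{-C(k,2)}`, the expected number of independent sets of size `k`
in `G(n,1/2)`. -/
noncomputable def f (n k : ℕ) : ℝ :=
  (n.choose k : ℝ) * (2 : ℝ) ^ (-(k.choose 2 : ℤ))

/-- `k₀(n)`: the largest `k` with `f(k) ≥ 1`. -/
noncomputable def k0 (n : ℕ) : ℕ := sSup {k | 1 ≤ f n k}

/-- `g(k) = C(n,k+2) · (2^{k+1} - 1) · 2^{-C(k+2,2)}`, the expected number of induced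
complete bipartite subgraphs on `k+2` vertices in `G(n,1/2)`. -/
noncomputable def g (n k : ℕ) : ℝ :=
  (n.choose (k + 2) : ℝ) * ((2 : ℝ) ^ (k + 1) - 1) * (2 : ℝ) ^ (-((k + 2).choose 2 : ℤ))

/-- The number of independent sets of size `k` in the graph determined by `ω`. -/
noncomputable def numIndep (n k : ℕ) (ω : Sym2 (Fin n) → Bool) : ℕ :=
  Set.ncard {S : Finset (Fin n) | S.card = k ∧ IsIndepFinset (graphOf n ω) S}

/-- The number of `m`-element vertex subsets inducing a complete bipartite graph in the
graph determined by `ω`. -/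
noncomputable def numBip (n m : ℕ) (ω : Sym2 (Fin n) → Bool) : ℕ :=
  Set.ncard {S : Finset (Fin n) | S.card = m ∧
    ∃ A B : Finset (Fin n), IsInducedCompleteBipartite (graphOf n ω) S A B}

/-- `f_i`: the contribution to `Σ_{K ~ K'} E(X_K X_{K'})` from ordered pairs of `k`-subsets
with intersection of size `i`. -/
noncomputable def fi (n k i : ℕ) : ℝ :=
  (n.choose k : ℝ) * (k.choose i : ℝ) * ((n - k).choose (k - i) : ℝ) *
    (2 : ℝ) ^ (-(2 * (k.choose 2) : ℤ) + (i.choose 2 : ℤ))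

lemma choose_ratio (m k : ℕ) (hkm : k ≤ m) :
    ∀ i ≤ k, (m.choose (k - i) : ℝ) * (((m:ℝ) - k + 1)/k)^i ≤ m.choose k := by
  have hkR : (k:ℝ) ≤ m := Nat.cast_le.mpr hkm
  have hq : (0:ℝ) ≤ ((m:ℝ) - k + 1)/k := by
    apply div_nonneg _ (Nat.cast_nonneg k); linarith
  intro i
  induction i with
  | zero => intro _; simp
  | succ i ih =>
    intro hik
    have hi : i ≤ k := Nat.le_of_succ_le hik
    set j := k - (i+1) with hj
    have hji : k - i = j + 1 := by omega
    have hjk : j + 1 ≤ k := by omega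
    have hjm : j ≤ m := by omega
    have hcast : (m.choose (j+1) : ℝ) * ((j:ℝ)+1) = (m.choose j : ℝ) * ((m:ℝ) - j) := by
      have := congrArg (fun x : ℕ => (x:ℝ)) (Nat.choose_succ_right_eq m j)
      push_cast [Nat.cast_sub hjm] at this
      linarith [this]
    have hj1 : (0:ℝ) < (j:ℝ) + 1 := by positivity
    have hjR : (j:ℝ) + 1 ≤ k := by exact_mod_cast Nat.cast_le.mpr hjk
    have step : (m.choose j : ℝ) * (((m:ℝ) - k + 1)/k) ≤ m.choose (j+1) := by
      have hq2 : ((m:ℝ) - k + 1)/k ≤ ((m:ℝ) - j)/((j:ℝ)+1) := by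
        apply div_le_div₀ (by linarith) (by linarith) hj1 (by linarith)
      have : (m.choose (j+1) : ℝ) = (m.choose j : ℝ) * (((m:ℝ) - j)/((j:ℝ)+1)) := by
        field_simp at hcast ⊢; linarith
      rw [this]
      exact mul_le_mul_of_nonneg_left hq2 (Nat.cast_nonneg _)
    calc (m.choose (k - (i+1)) : ℝ) * (((m:ℝ) - k + 1)/k)^(i+1)
        = ((m.choose j : ℝ) * (((m:ℝ) - k + 1)/k)) * (((m:ℝ) - k + 1)/k)^i := by
          rw [hj]; ring
      _ ≤ (m.choose (j+1) : ℝ) * (((m:ℝ) - k + 1)/k)^i := by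
          exact mul_le_mul_of_nonneg_right step (pow_nonneg hq i)
      _ = (m.choose (k - i) : ℝ) * (((m:ℝ) - k + 1)/k)^i := by rw [hji]
      _ ≤ m.choose k := ih hi

lemma choose_lower (n k i : ℕ) (hk : 0 < k) (hik : i ≤ k) (h4k : 4*k ≤ n) :
    ((n-k).choose (k-i) : ℝ) * ((n:ℝ)/(2*k))^i ≤ n.choose k := by
  have hkn : k ≤ n := by omega
  have hkn' : k ≤ n - k := by omega
  have hkR : (0:ℝ) < k := by exact_mod_cast hk
  have h4kR : 4*(k:ℝ) ≤ n := by exact_mod_cast h4k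
  have hsub : ((n - k : ℕ) : ℝ) = (n:ℝ) - k := by
    push_cast [Nat.cast_sub hkn]; ring
  have h1 : ((n-k).choose (k-i) : ℝ) * (((n:ℝ) - k - k + 1)/k)^i ≤ (n-k).choose k := by
    have := choose_ratio (n-k) k hkn' i hik
    rw [hsub] at this
    convert this using 3 <;> ring
  have h2 : ((n-k).choose k : ℝ) ≤ n.choose k := by
    exact_mod_cast Nat.choose_le_choose k (Nat.sub_le n k)
  have hq : (n:ℝ)/(2*k) ≤ ((n:ℝ) - k - k + 1)/k := by
    rw [div_le_div_iff₀ (by positivity) hkR]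
    nlinarith
  have hqn : (0:ℝ) ≤ (n:ℝ)/(2*k) := by positivity
  calc ((n-k).choose (k-i) : ℝ) * ((n:ℝ)/(2*k))^i
      ≤ ((n-k).choose (k-i) : ℝ) * (((n:ℝ) - k - k + 1)/k)^i := by
        exact mul_le_mul_of_nonneg_left (pow_le_pow_left₀ hqn hq i) (Nat.cast_nonneg _)
    _ ≤ ((n-k).choose k : ℝ) := h1
    _ ≤ n.choose k := h2

lemma rpow_event (c e : ℝ) (he : 0 < e) : ∀ᶠ n : ℕ in atTop, c ≤ (n:ℝ)^e := by
  have h := (tendsto_rpow_atTop he).comp tendsto_natCast_atTop_atTop (α := ℕ)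
  exact h.eventually_ge_atTop c

lemma eventual_facts : ∃ N : ℕ, ∀ n : ℕ, N ≤ n →
    (8:ℝ) ≤ n ∧ 1.01*(2*logb 2 (n:ℝ)) ≤ (n:ℝ)^(0.01:ℝ) ∧ 4*(n:ℝ)^(0.01:ℝ) ≤ (n:ℝ) ∧
      2*(n:ℝ)^(0.02:ℝ)*(n:ℝ)^((2.02/3:ℝ)) ≤ (n:ℝ)^(0.7:ℝ) := by
  have l2 : (0:ℝ) < Real.log 2 := Real.log_pos (by norm_num)
  have h1 : ∀ᶠ n : ℕ in atTop, (8:ℝ) ≤ n := by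
    filter_upwards [eventually_ge_atTop 8] with n hn; exact_mod_cast hn
  have h3 : ∀ᶠ n : ℕ in atTop, 1.01*(2*logb 2 (n:ℝ)) ≤ (n:ℝ)^(0.01:ℝ) := by
    filter_upwards [rpow_event (2.02/(0.005 * Real.log 2)) 0.005 (by norm_num), h1] with n hc hn
    have hn0 : (0:ℝ) ≤ n := by linarith
    have hy : (0:ℝ) ≤ (n:ℝ)^(0.005:ℝ) := Real.rpow_nonneg hn0 _
    have hl : Real.log (n:ℝ) ≤ (n:ℝ)^(0.005:ℝ)/0.005 := log_le_rpow_div hn0 (by norm_num)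
    have hdiv : (n:ℝ)^(0.005:ℝ)/0.005 = 200*(n:ℝ)^(0.005:ℝ) := by ring
    have g1 : 2.02 * Real.log (n:ℝ) ≤ 404 * (n:ℝ)^(0.005:ℝ) := by
      rw [hdiv] at hl; linarith
    calc 1.01*(2*logb 2 (n:ℝ)) = (2.02 * Real.log (n:ℝ))/Real.log 2 := by
          rw [Real.logb]; ring
      _ ≤ (404 * (n:ℝ)^(0.005:ℝ))/Real.log 2 := by gcongr
      _ = (2.02/(0.005 * Real.log 2)) * (n:ℝ)^(0.005:ℝ) := by field_simp; ring
      _ ≤ (n:ℝ)^(0.005:ℝ) * (n:ℝ)^(0.005:ℝ) := mul_le_mul_of_nonneg_right hc hy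
      _ = (n:ℝ)^(0.01:ℝ) := by rw [← Real.rpow_add' hn0 (by norm_num)]; norm_num
  have h4 : ∀ᶠ n : ℕ in atTop, 4*(n:ℝ)^(0.01:ℝ) ≤ (n:ℝ) := by
    filter_upwards [rpow_event 4 0.99 (by norm_num), h1] with n hc hn
    have hn0 : (0:ℝ) ≤ n := by linarith
    calc 4*(n:ℝ)^(0.01:ℝ) ≤ (n:ℝ)^(0.99:ℝ) * (n:ℝ)^(0.01:ℝ) :=
          mul_le_mul_of_nonneg_right hc (Real.rpow_nonneg hn0 _)
      _ = (n:ℝ) := by rw [← Real.rpow_add' hn0 (by norm_num)]; norm_num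
  have h5 : ∀ᶠ n : ℕ in atTop, 2*(n:ℝ)^(0.02:ℝ)*(n:ℝ)^((2.02/3:ℝ)) ≤ (n:ℝ)^(0.7:ℝ) := by
    filter_upwards [rpow_event 2 (0.7 - 0.02 - 2.02/3) (by norm_num), h1] with n hc hn
    have hn0 : (0:ℝ) ≤ n := by linarith
    have ha : (0:ℝ) ≤ (n:ℝ)^(0.02:ℝ) := Real.rpow_nonneg hn0 _
    have hb : (0:ℝ) ≤ (n:ℝ)^((2.02/3:ℝ)) := Real.rpow_nonneg hn0 _
    calc 2*(n:ℝ)^(0.02:ℝ)*(n:ℝ)^((2.02/3:ℝ))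
        = 2*((n:ℝ)^(0.02:ℝ)*(n:ℝ)^((2.02/3:ℝ))) := by ring
      _ ≤ (n:ℝ)^((0.7 - 0.02 - 2.02/3:ℝ)) * ((n:ℝ)^(0.02:ℝ)*(n:ℝ)^((2.02/3:ℝ))) :=
          mul_le_mul_of_nonneg_right hc (mul_nonneg ha hb)
      _ = (n:ℝ)^((0.7 - 0.02 - 2.02/3:ℝ) + 0.02 + (2.02/3:ℝ)) := by
          rw [Real.rpow_add' hn0 (by norm_num), Real.rpow_add' hn0 (by norm_num)]; ring
      _ = (n:ℝ)^(0.7:ℝ) := by norm_num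
  obtain ⟨N, hN⟩ := (h1.and (h3.and (h4.and h5))).exists_forall_of_atTop
  exact ⟨N, fun n hn => ⟨(hN n hn).1, (hN n hn).2.1, (hN n hn).2.2.1, (hN n hn).2.2.2⟩⟩

lemma k_facts (n k : ℕ) (hf : (8:ℝ) ≤ n ∧ 1.01*(2*logb 2 (n:ℝ)) ≤ (n:ℝ)^(0.01:ℝ) ∧
      4*(n:ℝ)^(0.01:ℝ) ≤ (n:ℝ) ∧ 2*(n:ℝ)^(0.02:ℝ)*(n:ℝ)^((2.02/3:ℝ)) ≤ (n:ℝ)^(0.7:ℝ))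
    (hk1 : (1 - (1/100:ℝ)) * (2 * Real.logb 2 n) ≤ (k:ℝ))
    (hk2 : (k:ℝ) ≤ (1 + (1/100:ℝ)) * (2 * Real.logb 2 n)) :
    (k:ℝ) ≤ (n:ℝ)^(0.01:ℝ) ∧ 4*k ≤ n ∧ 4 ≤ k ∧
      (2:ℝ)^((k:ℝ)) ≤ (n:ℝ)^(2.02:ℝ) ∧ (n:ℝ)^(1.98:ℝ) ≤ (2:ℝ)^((k:ℝ)) := by
  obtain ⟨hn8, hF3, hF4, hF5⟩ := hf
  have hn0 : (0:ℝ) < n := by linarith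
  have hL3 : (3:ℝ) ≤ logb 2 (n:ℝ) := by
    have h8 : logb 2 (8:ℝ) = 3 := by
      rw [show (8:ℝ) = 2^(3:ℝ) by norm_num, Real.logb_rpow (by norm_num) (by norm_num)]
    rw [← h8]
    exact Real.logb_le_logb_of_le (by norm_num) (by norm_num) hn8
  have hkub : (k:ℝ) ≤ (n:ℝ)^(0.01:ℝ) := by
    refine le_trans ?_ hF3; linarith
  have h4k : 4*k ≤ n := by
    have : 4*(k:ℝ) ≤ n := by nlinarith [Real.rpow_nonneg (le_of_lt hn0) (0.01:ℝ)]
    exact_mod_cast this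
  have hk4 : 4 ≤ k := by
    have : (4:ℝ) ≤ k := by nlinarith
    exact_mod_cast this
  have hexp : (2:ℝ)^(Real.logb 2 (n:ℝ)) = n := Real.rpow_logb (by norm_num) (by norm_num) hn0
  have h2k : (2:ℝ)^((k:ℝ)) ≤ (n:ℝ)^(2.02:ℝ) := by
    calc (2:ℝ)^((k:ℝ)) ≤ (2:ℝ)^(Real.logb 2 (n:ℝ) * 2.02) :=
          Real.rpow_le_rpow_of_exponent_le (by norm_num) (by linarith)
      _ = ((2:ℝ)^(Real.logb 2 (n:ℝ)))^(2.02:ℝ) := Real.rpow_mul (by norm_num) _ _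
      _ = (n:ℝ)^(2.02:ℝ) := by rw [hexp]
  have h2kl : (n:ℝ)^(1.98:ℝ) ≤ (2:ℝ)^((k:ℝ)) := by
    calc (n:ℝ)^(1.98:ℝ) = ((2:ℝ)^(Real.logb 2 (n:ℝ)))^(1.98:ℝ) := by rw [hexp]
      _ = (2:ℝ)^(Real.logb 2 (n:ℝ) * 1.98) := (Real.rpow_mul (by norm_num) _ _).symm
      _ ≤ (2:ℝ)^((k:ℝ)) :=
          Real.rpow_le_rpow_of_exponent_le (by norm_num) (by linarith)
  exact ⟨hkub, h4k, hk4, h2k, h2kl⟩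

lemma claim_a (n k i : ℕ) (hn8 : (8:ℝ) ≤ n) (hkub : (k:ℝ) ≤ (n:ℝ)^(0.01:ℝ))
    (h4k : 4*k ≤ n) (hk4 : 4 ≤ k) (h2k : (2:ℝ)^((k:ℝ)) ≤ (n:ℝ)^(2.02:ℝ))
    (hF5 : 2*(n:ℝ)^(0.02:ℝ)*(n:ℝ)^((2.02/3:ℝ)) ≤ (n:ℝ)^(0.7:ℝ))
    (hi2 : 2 ≤ i) (hi23 : (i:ℝ) ≤ 2*k/3) :
    fi n k i ≤ f n k^2 * (n:ℝ)^(-(0.3:ℝ)*i) := by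
  have hn0 : (0:ℝ) < n := by linarith
  have hk0 : (0:ℝ) < k := by exact_mod_cast Nat.lt_of_lt_of_le (by norm_num) hk4
  have hik : i ≤ k := by
    have : (i:ℝ) ≤ k := by linarith
    exact_mod_cast this
  -- scalar inequality
  have scalar : (k:ℝ) * (2:ℝ)^((((i:ℝ)-1)/2):ℝ) ≤ (n:ℝ)/(2*k) * (n:ℝ)^(-(0.3:ℝ)) := by
    have e1 : (2:ℝ)^((((i:ℝ)-1)/2):ℝ) ≤ (2:ℝ)^(((k:ℝ)/3):ℝ) :=
      Real.rpow_le_rpow_of_exponent_le (by norm_num) (by linarith)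
    have e2 : (2:ℝ)^(((k:ℝ)/3):ℝ) ≤ (n:ℝ)^((2.02/3:ℝ)) := by
      have : (2:ℝ)^(((k:ℝ)/3):ℝ) = ((2:ℝ)^((k:ℝ)))^((1/3:ℝ)) := by
        rw [← Real.rpow_mul (by norm_num : (0:ℝ) ≤ 2)]
        congr 1; ring
      rw [this]
      have : (n:ℝ)^((2.02/3:ℝ)) = ((n:ℝ)^((2.02:ℝ)))^((1/3:ℝ)) := by
        rw [← Real.rpow_mul (le_of_lt hn0)]; norm_num
      rw [this]
      exact Real.rpow_le_rpow (by positivity) h2k (by norm_num)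
    have step : (k:ℝ) * (2:ℝ)^((((i:ℝ)-1)/2):ℝ) ≤ (n:ℝ)^(0.01:ℝ) * (n:ℝ)^((2.02/3:ℝ)) := by
      apply mul_le_mul hkub (le_trans e1 e2) (by positivity) (by positivity)
    refine le_trans step ?_
    rw [div_mul_eq_mul_div, le_div_iff₀ (by positivity)]
    have hrw : (n:ℝ) * (n:ℝ)^(-(0.3:ℝ)) = (n:ℝ)^((0.7:ℝ)) := by
      nth_rewrite 1 [← Real.rpow_one (n:ℝ)]
      rw [← Real.rpow_add hn0]; norm_num
    calc (n:ℝ)^(0.01:ℝ) * (n:ℝ)^((2.02/3:ℝ)) * (2*k)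
        ≤ (n:ℝ)^(0.01:ℝ) * (n:ℝ)^((2.02/3:ℝ)) * (2*(n:ℝ)^(0.01:ℝ)) := by
          have : (0:ℝ) ≤ (n:ℝ)^(0.01:ℝ) * (n:ℝ)^((2.02/3:ℝ)) := by positivity
          nlinarith
      _ = 2*((n:ℝ)^(0.01:ℝ)*(n:ℝ)^(0.01:ℝ))*(n:ℝ)^((2.02/3:ℝ)) := by ring
      _ = 2*(n:ℝ)^(0.02:ℝ)*(n:ℝ)^((2.02/3:ℝ)) := by
          rw [← Real.rpow_add hn0]; norm_num
      _ ≤ (n:ℝ)^(0.7:ℝ) := hF5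
      _ = (n:ℝ) * (n:ℝ)^(-(0.3:ℝ)) := hrw.symm
  -- core1
  have core1 : (k.choose i : ℝ) * (2:ℝ)^(i.choose 2 : ℕ) ≤
      ((n:ℝ)/(2*k))^i * (n:ℝ)^(-(0.3:ℝ)*(i:ℝ)) := by
    have s1 : (k.choose i : ℝ) ≤ (k:ℝ)^i := by
      exact_mod_cast Nat.choose_le_pow k i
    have s2 : (2:ℝ)^(i.choose 2 : ℕ) = ((2:ℝ)^((((i:ℝ)-1)/2):ℝ))^i := by
      rw [← Real.rpow_natCast ((2:ℝ)^((((i:ℝ)-1)/2):ℝ)) i, ← Real.rpow_mul (by norm_num)]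
      rw [← Real.rpow_natCast 2 (i.choose 2)]
      congr 1
      rw [Nat.cast_choose_two]
      ring
    have s3 : (n:ℝ)^(-(0.3:ℝ)*(i:ℝ)) = ((n:ℝ)^(-(0.3:ℝ)))^i := by
      rw [← Real.rpow_natCast ((n:ℝ)^(-(0.3:ℝ))) i, ← Real.rpow_mul (le_of_lt hn0)]
    rw [s2, s3]
    calc (k.choose i : ℝ) * ((2:ℝ)^((((i:ℝ)-1)/2):ℝ))^i
        ≤ (k:ℝ)^i * ((2:ℝ)^((((i:ℝ)-1)/2):ℝ))^i := by
          exact mul_le_mul_of_nonneg_right s1 (by positivity)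
      _ = ((k:ℝ) * (2:ℝ)^((((i:ℝ)-1)/2):ℝ))^i := by rw [mul_pow]
      _ ≤ ((n:ℝ)/(2*k) * (n:ℝ)^(-(0.3:ℝ)))^i := by
          exact pow_le_pow_left₀ (by positivity) scalar i
      _ = ((n:ℝ)/(2*k))^i * ((n:ℝ)^(-(0.3:ℝ)))^i := by rw [mul_pow]
  -- assemble
  have hA : (0:ℝ) < n.choose k := by
    exact_mod_cast Nat.choose_pos (by omega : k ≤ n)
  have inner : (k.choose i : ℝ) * ((n-k).choose (k-i) : ℝ) * (2:ℝ)^(i.choose 2 : ℕ)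
      ≤ (n.choose k : ℝ) * (n:ℝ)^(-(0.3:ℝ)*(i:ℝ)) := by
    calc (k.choose i : ℝ) * ((n-k).choose (k-i) : ℝ) * (2:ℝ)^(i.choose 2 : ℕ)
        = ((n-k).choose (k-i) : ℝ) * ((k.choose i : ℝ) * (2:ℝ)^(i.choose 2 : ℕ)) := by ring
      _ ≤ ((n-k).choose (k-i) : ℝ) * (((n:ℝ)/(2*k))^i * (n:ℝ)^(-(0.3:ℝ)*(i:ℝ))) := by
          exact mul_le_mul_of_nonneg_left core1 (Nat.cast_nonneg _)
      _ = (((n-k).choose (k-i) : ℝ) * ((n:ℝ)/(2*k))^i) * (n:ℝ)^(-(0.3:ℝ)*(i:ℝ)) := by ring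
      _ ≤ (n.choose k : ℝ) * (n:ℝ)^(-(0.3:ℝ)*(i:ℝ)) := by
          exact mul_le_mul_of_nonneg_right
            (choose_lower n k i (by omega) hik h4k) (by positivity)
  unfold fi f
  have hsplit : (2:ℝ)^(-(2 * (k.choose 2) : ℤ) + (i.choose 2 : ℤ)) =
      (2:ℝ)^(-(2 * (k.choose 2) : ℤ)) * (2:ℝ)^(i.choose 2 : ℕ) := by
    rw [zpow_add₀ (by norm_num : (2:ℝ) ≠ 0), zpow_natCast]
  have hf2 : ((n.choose k : ℝ) * (2:ℝ)^(-(k.choose 2 : ℤ)))^2 =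
      (n.choose k : ℝ)^2 * (2:ℝ)^(-(2 * (k.choose 2) : ℤ)) := by
    have : (2:ℝ)^(-(k.choose 2 : ℤ)) * (2:ℝ)^(-(k.choose 2 : ℤ)) =
        (2:ℝ)^(-(2 * (k.choose 2) : ℤ)) := by
      rw [← zpow_add₀ (by norm_num : (2:ℝ) ≠ 0)]; ring_nf
    calc ((n.choose k : ℝ) * (2:ℝ)^(-(k.choose 2 : ℤ)))^2
        = (n.choose k : ℝ)^2 * ((2:ℝ)^(-(k.choose 2 : ℤ)) * (2:ℝ)^(-(k.choose 2 : ℤ))) := by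
          ring
      _ = _ := by rw [this]
  rw [hsplit, hf2]
  have hz : (0:ℝ) ≤ (2:ℝ)^(-(2 * (k.choose 2) : ℤ)) := by positivity
  calc (n.choose k : ℝ) * (k.choose i : ℝ) * ((n-k).choose (k-i) : ℝ) *
        ((2:ℝ)^(-(2 * (k.choose 2) : ℤ)) * (2:ℝ)^(i.choose 2 : ℕ))
      = ((n.choose k : ℝ) * ((k.choose i : ℝ) * ((n-k).choose (k-i) : ℝ) *
          (2:ℝ)^(i.choose 2 : ℕ))) * (2:ℝ)^(-(2 * (k.choose 2) : ℤ)) := by ring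
    _ ≤ ((n.choose k : ℝ) * ((n.choose k : ℝ) * (n:ℝ)^(-(0.3:ℝ)*(i:ℝ)))) *
          (2:ℝ)^(-(2 * (k.choose 2) : ℤ)) := by
        apply mul_le_mul_of_nonneg_right _ hz
        apply mul_le_mul_of_nonneg_left _ (Nat.cast_nonneg _)
        exact inner
    _ = (n.choose k : ℝ)^2 * (2:ℝ)^(-(2 * (k.choose 2) : ℤ)) * (n:ℝ)^(-(0.3:ℝ)*(i:ℝ)) := by
        ring

lemma claim_b (n k j : ℕ) (hn8 : (8:ℝ) ≤ n) (hkub : (k:ℝ) ≤ (n:ℝ)^(0.01:ℝ))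
    (h4k : 4*k ≤ n) (hk4 : 4 ≤ k) (h2kl : (n:ℝ)^(1.98:ℝ) ≤ (2:ℝ)^((k:ℝ)))
    (hj1 : 1 ≤ j) (hj3 : (j:ℝ) ≤ (k:ℝ)/3) :
    fi n k (k - j) ≤ f n k * (n:ℝ)^(-(0.3:ℝ)*j) := by
  have hn0 : (0:ℝ) < n := by linarith
  have hn1 : (1:ℝ) ≤ n := by linarith
  have hjk : j ≤ k := by
    have hk0 : (0:ℝ) ≤ k := Nat.cast_nonneg k
    have : (j:ℝ) ≤ k := by linarith
    exact_mod_cast this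
  have hkjR : ((k - j : ℕ) : ℝ) = (k:ℝ) - j := by
    push_cast [Nat.cast_sub hjk]; ring
  -- scalar
  have scalar : (k:ℝ) * (n:ℝ) ≤ (2:ℝ)^(((k - j : ℕ):ℝ)) * (n:ℝ)^(-(0.3:ℝ)) := by
    have key : (k:ℝ) * (n:ℝ)^(1.3:ℝ) ≤ (2:ℝ)^(((k - j : ℕ):ℝ)) := by
      have s1 : (k:ℝ) * (n:ℝ)^(1.3:ℝ) ≤ (n:ℝ)^(0.01:ℝ) * (n:ℝ)^(1.3:ℝ) :=
        mul_le_mul_of_nonneg_right hkub (by positivity)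
      have s2 : (n:ℝ)^(0.01:ℝ) * (n:ℝ)^(1.3:ℝ) = (n:ℝ)^(1.31:ℝ) := by
        rw [← Real.rpow_add hn0]; norm_num
      have s3 : (n:ℝ)^(1.31:ℝ) ≤ (n:ℝ)^(1.32:ℝ) :=
        Real.rpow_le_rpow_of_exponent_le hn1 (by norm_num)
      have s4 : (n:ℝ)^(1.32:ℝ) = ((n:ℝ)^(1.98:ℝ))^((2/3:ℝ)) := by
        rw [← Real.rpow_mul (le_of_lt hn0)]; norm_num
      have s5 : ((n:ℝ)^(1.98:ℝ))^((2/3:ℝ)) ≤ ((2:ℝ)^((k:ℝ)))^((2/3:ℝ)) :=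
        Real.rpow_le_rpow (by positivity) h2kl (by norm_num)
      have s6 : ((2:ℝ)^((k:ℝ)))^((2/3:ℝ)) = (2:ℝ)^((2/3:ℝ)*(k:ℝ)) := by
        rw [← Real.rpow_mul (by norm_num : (0:ℝ) ≤ 2)]; ring_nf
      have s7 : (2:ℝ)^((2/3:ℝ)*(k:ℝ)) ≤ (2:ℝ)^(((k - j : ℕ):ℝ)) := by
        apply Real.rpow_le_rpow_of_exponent_le (by norm_num)
        rw [hkjR]; linarith
      calc (k:ℝ) * (n:ℝ)^(1.3:ℝ) ≤ (n:ℝ)^(0.01:ℝ) * (n:ℝ)^(1.3:ℝ) := s1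
        _ = (n:ℝ)^(1.31:ℝ) := s2
        _ ≤ (n:ℝ)^(1.32:ℝ) := s3
        _ = ((n:ℝ)^(1.98:ℝ))^((2/3:ℝ)) := s4
        _ ≤ ((2:ℝ)^((k:ℝ)))^((2/3:ℝ)) := s5
        _ = (2:ℝ)^((2/3:ℝ)*(k:ℝ)) := s6
        _ ≤ (2:ℝ)^(((k - j : ℕ):ℝ)) := s7
    have hsplit : (n:ℝ) = (n:ℝ)^(1.3:ℝ) * (n:ℝ)^(-(0.3:ℝ)) := by
      rw [← Real.rpow_add hn0]; norm_num
    calc (k:ℝ) * (n:ℝ) = ((k:ℝ) * (n:ℝ)^(1.3:ℝ)) * (n:ℝ)^(-(0.3:ℝ)) := by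
          rw [mul_assoc, ← hsplit]
      _ ≤ (2:ℝ)^(((k - j : ℕ):ℝ)) * (n:ℝ)^(-(0.3:ℝ)) :=
          mul_le_mul_of_nonneg_right key (by positivity)
  -- choose-two inequality
  have hd : (k - j).choose 2 + (k - j) * j ≤ k.choose 2 := by
    have hre : ((k - j).choose 2 : ℝ) + ((k - j:ℕ):ℝ) * j ≤ (k.choose 2 : ℝ) := by
      rw [Nat.cast_choose_two, Nat.cast_choose_two, hkjR]
      have hj0 : (0:ℝ) ≤ j := Nat.cast_nonneg j
      have hjkR : (j:ℝ) ≤ k := by exact_mod_cast hjk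
      have hj1R : (1:ℝ) ≤ j := by exact_mod_cast hj1
      nlinarith
    exact_mod_cast hre
  -- main reduced inequality
  have red : (k.choose j : ℝ) * ((n - k).choose j : ℝ) *
      (2:ℝ)^(((k-j).choose 2 : ℤ) - (k.choose 2 : ℤ)) ≤ (n:ℝ)^(-(0.3:ℝ)*(j:ℝ)) := by
    set d : ℤ := (k.choose 2 : ℤ) - ((k-j).choose 2 : ℤ) with hdd
    have hdge : ((k-j) * j : ℤ) ≤ d := by
      have h' : ((k-j).choose 2 : ℤ) + ((k-j:ℕ):ℤ)*(j:ℤ) ≤ (k.choose 2:ℤ) := by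
        exact_mod_cast hd
      simp only [hdd]; push_cast [Nat.cast_sub hjk] at h' ⊢; linarith
    have hP : (k.choose j : ℝ) * ((n-k).choose j : ℝ) ≤ ((k:ℝ)*(n:ℝ))^j := by
      have b1 : (k.choose j : ℝ) ≤ (k:ℝ)^j := by exact_mod_cast Nat.choose_le_pow k j
      have b2 : ((n-k).choose j : ℝ) ≤ (n:ℝ)^j := by
        have : ((n-k).choose j : ℝ) ≤ ((n-k:ℕ):ℝ)^j := by
          exact_mod_cast Nat.choose_le_pow (n-k) j
        refine le_trans this (pow_le_pow_left₀ (Nat.cast_nonneg _) ?_ j)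
        exact_mod_cast Nat.sub_le n k
      rw [mul_pow]
      exact mul_le_mul b1 b2 (Nat.cast_nonneg _) (by positivity)
    have h2 : ((k:ℝ)*(n:ℝ))^j ≤ ((2:ℝ)^(((k-j:ℕ)):ℝ) * (n:ℝ)^(-(0.3:ℝ)))^j :=
      pow_le_pow_left₀ (by positivity) scalar j
    have h3 : ((2:ℝ)^(((k-j:ℕ)):ℝ) * (n:ℝ)^(-(0.3:ℝ)))^j =
        (2:ℝ)^(((k-j)*j : ℕ)) * (n:ℝ)^(-(0.3:ℝ)*(j:ℝ)) := by
      rw [mul_pow]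
      congr 1
      · rw [← Real.rpow_natCast ((2:ℝ)^((((k-j):ℕ)):ℝ)) j,
          ← Real.rpow_mul (by norm_num : (0:ℝ) ≤ 2), ← Real.rpow_natCast 2 ((k-j)*j)]
        congr 1; push_cast; ring
      · rw [← Real.rpow_natCast ((n:ℝ)^(-(0.3:ℝ))) j, ← Real.rpow_mul (le_of_lt hn0)]
    have h4 : (2:ℝ)^((((k-j)*j:ℕ)):ℤ) ≤ (2:ℝ)^d := by
      apply zpow_le_zpow_right₀ (by norm_num : (1:ℝ) ≤ 2)
      exact_mod_cast hdge
    have hPfinal : (k.choose j : ℝ) * ((n-k).choose j : ℝ) ≤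
        (2:ℝ)^d * (n:ℝ)^(-(0.3:ℝ)*(j:ℝ)) := by
      calc (k.choose j : ℝ) * ((n-k).choose j : ℝ) ≤ ((k:ℝ)*(n:ℝ))^j := hP
        _ ≤ ((2:ℝ)^(((k-j:ℕ)):ℝ) * (n:ℝ)^(-(0.3:ℝ)))^j := h2
        _ = (2:ℝ)^(((k-j)*j : ℕ)) * (n:ℝ)^(-(0.3:ℝ)*(j:ℝ)) := h3
        _ = (2:ℝ)^((((k-j)*j:ℕ)):ℤ) * (n:ℝ)^(-(0.3:ℝ)*(j:ℝ)) := by rw [zpow_natCast]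
        _ ≤ (2:ℝ)^d * (n:ℝ)^(-(0.3:ℝ)*(j:ℝ)) :=
            mul_le_mul_of_nonneg_right h4 (by positivity)
    have hexp : (((k-j).choose 2 : ℤ) - (k.choose 2 : ℤ)) = -d := by
      simp only [hdd]; ring
    rw [hexp, zpow_neg]
    have hdpos : (0:ℝ) < (2:ℝ)^d := by positivity
    calc (k.choose j : ℝ) * ((n-k).choose j : ℝ) * ((2:ℝ)^d)⁻¹
        ≤ ((2:ℝ)^d * (n:ℝ)^(-(0.3:ℝ)*(j:ℝ))) * ((2:ℝ)^d)⁻¹ :=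
          mul_le_mul_of_nonneg_right hPfinal (by positivity)
      _ = (n:ℝ)^(-(0.3:ℝ)*(j:ℝ)) := by field_simp
  -- assembly
  unfold fi f
  rw [Nat.choose_symm hjk, Nat.sub_sub_self hjk]
  have hsplit2 : (2:ℝ)^(-(2 * (k.choose 2) : ℤ) + ((k-j).choose 2 : ℤ)) =
      (2:ℝ)^(-(k.choose 2 : ℤ)) * (2:ℝ)^(((k-j).choose 2 : ℤ) - (k.choose 2 : ℤ)) := by
    rw [← zpow_add₀ (by norm_num : (2:ℝ) ≠ 0)]
    congr 1; push_cast; ring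
  rw [hsplit2]
  calc (n.choose k : ℝ) * (k.choose j : ℝ) * ((n-k).choose j : ℝ) *
        ((2:ℝ)^(-(k.choose 2 : ℤ)) * (2:ℝ)^(((k-j).choose 2 : ℤ) - (k.choose 2 : ℤ)))
      = ((n.choose k : ℝ) * (2:ℝ)^(-(k.choose 2 : ℤ))) *
        ((k.choose j : ℝ) * ((n-k).choose j : ℝ) *
          (2:ℝ)^(((k-j).choose 2 : ℤ) - (k.choose 2 : ℤ))) := by ring
    _ ≤ ((n.choose k : ℝ) * (2:ℝ)^(-(k.choose 2 : ℤ))) * (n:ℝ)^(-(0.3:ℝ)*(j:ℝ)) := by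
        exact mul_le_mul_of_nonneg_left red (by positivity)
    _ = (n.choose k : ℝ) * (2:ℝ)^(-(k.choose 2 : ℤ)) * (n:ℝ)^(-(0.3:ℝ)*(j:ℝ)) := by ring

lemma part1 : ∃ N : ℕ, ∀ n : ℕ, N ≤ n → ∀ k : ℕ,
    (1 - (1/100:ℝ)) * (2 * Real.logb 2 n) ≤ (k : ℝ) →
    (k : ℝ) ≤ (1 + (1/100:ℝ)) * (2 * Real.logb 2 n) →
    (∀ i : ℕ, 2 ≤ i → (i : ℝ) ≤ 2 * k / 3 →
      fi n k i ≤ f n k ^ 2 * (n : ℝ) ^ (-(0.3 : ℝ) * i)) ∧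
    (∀ j : ℕ, 1 ≤ j → (j : ℝ) ≤ (k : ℝ) / 3 →
      fi n k (k - j) ≤ f n k * (n : ℝ) ^ (-(0.3 : ℝ) * j)) := by
  obtain ⟨N, hN⟩ := eventual_facts
  refine ⟨N, fun n hn k hk1 hk2 => ?_⟩
  obtain ⟨hkub, h4k, hk4, h2k, h2kl⟩ := k_facts n k (hN n hn) hk1 hk2
  have hn8 := (hN n hn).1
  have hF5 := (hN n hn).2.2.2
  exact ⟨fun i hi2 hi23 => claim_a n k i hn8 hkub h4k hk4 h2k hF5 hi2 hi23,
         fun j hj1 hj3 => claim_b n k j hn8 hkub h4k hk4 h2kl hj1 hj3⟩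

lemma half_coe : (((1:ℝ)/2).toNNReal : ℝ≥0∞) = 1/2 := by
  rw [show ((1:ℝ)/2) = (2⁻¹:ℝ) by norm_num, Real.toNNReal_inv]
  simp [ENNReal.coe_inv]

lemma bern_half_false : bernoulliBool (1/2) {false} = 1/2 := by
  unfold bernoulliBool
  rw [show ((1:ℝ)-1/2) = ((1:ℝ)/2) by norm_num]
  rw [Measure.add_apply, Measure.smul_apply, Measure.smul_apply, ENNReal.smul_def,
    ENNReal.smul_def, smul_eq_mul, smul_eq_mul, half_coe]
  rw [Measure.dirac_apply' _ (measurableSet_singleton false),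
    Measure.dirac_apply_of_mem (Set.mem_singleton false)]
  simp

lemma bern_half_univ : bernoulliBool (1/2) Set.univ = 1 := by
  unfold bernoulliBool
  rw [show ((1:ℝ)-1/2) = ((1:ℝ)/2) by norm_num]
  rw [Measure.add_apply, Measure.smul_apply, Measure.smul_apply, ENNReal.smul_def,
    ENNReal.smul_def, smul_eq_mul, smul_eq_mul, half_coe]
  rw [Measure.dirac_apply_of_mem (Set.mem_univ _), Measure.dirac_apply_of_mem (Set.mem_univ _)]
  rw [mul_one]
  exact ENNReal.add_halves 1

instance : IsProbabilityMeasure (bernoulliBool (1/2)) := ⟨bern_half_univ⟩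

instance (n : ℕ) : IsProbabilityMeasure (erdosRenyi n (1/2)) := by
  unfold erdosRenyi; infer_instance

/-- the edges within S -/
def ES {n : ℕ} (S : Finset (Fin n)) : Finset (Sym2 (Fin n)) :=
  S.sym2.filter (fun e => ¬ e.IsDiag)

def cyl {n : ℕ} (E : Finset (Sym2 (Fin n))) : Set (Sym2 (Fin n) → Bool) :=
  {ω | ∀ e ∈ E, ω e = false}

lemma cylinder_measure (n : ℕ) (E : Finset (Sym2 (Fin n))) :
    erdosRenyi n (1/2) (cyl E) = (1/2 : ℝ≥0∞)^(E.card) := by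
  show erdosRenyi n (1/2) {ω | ∀ e ∈ E, ω e = false} = (1/2 : ℝ≥0∞)^(E.card)
  have hset : {ω : Sym2 (Fin n) → Bool | ∀ e ∈ E, ω e = false} =
      Set.pi Set.univ (fun e => if e ∈ E then ({false} : Set Bool) else Set.univ) := by
    ext ω
    simp only [Set.mem_setOf_eq, Set.mem_pi, Set.mem_univ, forall_true_left]
    constructor
    · intro h e
      by_cases he : e ∈ E
      · simp [he, h e he]
      · simp [he]
    · intro h e he
      have := h e
      simp [he] at this
      exact this
  rw [hset]
  unfold erdosRenyi
  rw [Measure.pi_pi]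
  have : ∀ e : Sym2 (Fin n),
      bernoulliBool (1/2) (if e ∈ E then ({false} : Set Bool) else Set.univ) =
      (if e ∈ E then (1/2 : ℝ≥0∞) else 1) := by
    intro e
    by_cases he : e ∈ E
    · rw [if_pos he, if_pos he]; exact bern_half_false
    · rw [if_neg he, if_neg he]; exact bern_half_univ
  rw [Finset.prod_congr rfl (fun e _ => this e), Finset.prod_ite_mem, Finset.univ_inter,
    Finset.prod_const]

lemma cyl_meas {n : ℕ} (E : Finset (Sym2 (Fin n))) : MeasurableSet (cyl E) := by
  have : cyl E = ⋂ e ∈ (E : Set (Sym2 (Fin n))), (fun ω : Sym2 (Fin n) → Bool => ω e) ⁻¹' {false} := by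
    ext ω; simp [cyl]
  rw [this]
  exact MeasurableSet.biInter (E : Set (Sym2 (Fin n))).to_countable
    (fun e _ => (measurable_pi_apply e) (measurableSet_singleton _))

lemma cyl_measure_real (n : ℕ) (E : Finset (Sym2 (Fin n))) :
    (erdosRenyi n (1/2) (cyl E)).toReal = (2:ℝ)^(-(E.card:ℤ)) := by
  rw [cylinder_measure]
  rw [ENNReal.toReal_pow]
  norm_num
  rw [one_div, inv_pow]

lemma cyl_inter {n : ℕ} (E F : Finset (Sym2 (Fin n))) : cyl E ∩ cyl F = cyl (E ∪ F) := by
  ext ω; simp only [cyl, Set.mem_inter_iff, Set.mem_setOf_eq, Finset.mem_union]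
  constructor
  · rintro ⟨h1, h2⟩ e (he | he); exacts [h1 e he, h2 e he]
  · intro h; exact ⟨fun e he => h e (Or.inl he), fun e he => h e (Or.inr he)⟩

lemma ES_card {n : ℕ} (S : Finset (Fin n)) : (ES S).card = S.card.choose 2 := by
  classical
  have hsplit : (S.sym2.filter (fun e => e.IsDiag)).card + (ES S).card = S.sym2.card := by
    show _ + (S.sym2.filter (fun e => ¬ e.IsDiag)).card = _
    rw [Finset.card_filter_add_card_filter_not]
  have hdiag : S.sym2.filter (fun e => e.IsDiag) = S.image Sym2.diag := by
    ext e
    induction e with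
    | _ a b =>
      simp only [Finset.mem_filter, Finset.mk_mem_sym2_iff, Finset.mem_image, Sym2.isDiag_iff_proj_eq]
      constructor
      · rintro ⟨⟨ha, hb⟩, hab⟩
        subst hab
        exact ⟨a, ha, rfl⟩
      · rintro ⟨x, hx, hxe⟩
        rw [Sym2.diag] at hxe
        obtain ⟨rfl, rfl⟩ | ⟨rfl, rfl⟩ := Sym2.eq_iff.mp hxe
        · exact ⟨⟨hx, hx⟩, rfl⟩
        · exact ⟨⟨hx, hx⟩, rfl⟩
  have hdc : (S.image Sym2.diag).card = S.card :=
    Finset.card_image_of_injective _ Sym2.diag_injective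
  have hs2 : S.sym2.card = (S.card + 1).choose 2 := Finset.card_sym2 S
  have hch : (S.card+1).choose 2 = S.card + S.card.choose 2 := by
    rw [Nat.choose_succ_succ]
    simp [Nat.choose_one_right]
  have h1 : (S.sym2.filter (fun e => e.IsDiag)).card = S.card := by rw [hdiag, hdc]
  omega

lemma ES_inter {n : ℕ} (S T : Finset (Fin n)) : ES S ∩ ES T ⊆ ES (S ∩ T) := by
  intro e he
  rw [Finset.mem_inter] at he
  obtain ⟨h1, h2⟩ := he
  rw [ES, Finset.mem_filter, Finset.mem_sym2_iff] at h1 h2 ⊢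
  refine ⟨fun a ha => Finset.mem_inter.mpr ⟨h1.1 a ha, h2.1 a ha⟩, h1.2⟩

lemma indep_iff {n : ℕ} (ω : Sym2 (Fin n) → Bool) (S : Finset (Fin n)) :
    IsIndepFinset (graphOf n ω) S ↔ ∀ e ∈ ES S, ω e = false := by
  constructor
  · intro h e he
    induction e with
    | _ a b =>
      rw [ES, Finset.mem_filter, Finset.mk_mem_sym2_iff] at he
      obtain ⟨⟨ha, hb⟩, hab⟩ := he
      have hne : a ≠ b := fun hh => hab (by simp [hh])
      have := h a ha b hb
      rw [graphOf, SimpleGraph.fromEdgeSet_adj] at this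
      simp only [Set.mem_setOf_eq] at this
      by_cases h' : ω s(a,b) = true
      · exact absurd ⟨h', hne⟩ this
      · simpa using h'
  · intro h a ha b hb hadj
    rw [graphOf, SimpleGraph.fromEdgeSet_adj] at hadj
    obtain ⟨hmem, hne⟩ := hadj
    have he : s(a,b) ∈ ES S := by
      rw [ES, Finset.mem_filter, Finset.mk_mem_sym2_iff]
      exact ⟨⟨ha, hb⟩, by simp [Sym2.isDiag_iff_proj_eq, hne]⟩
    have := h _ he
    simp only [Set.mem_setOf_eq] at hmem
    rw [this] at hmem
    exact Bool.false_ne_true hmem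

lemma numIndep_eq (n k : ℕ) (ω : Sym2 (Fin n) → Bool) :
    (numIndep n k ω : ℝ) = ∑ S ∈ Finset.powersetCard k (Finset.univ : Finset (Fin n)),
      (cyl (ES S)).indicator (fun _ => (1:ℝ)) ω := by
  classical
  have h1 : numIndep n k ω =
      (Finset.univ.filter (fun S : Finset (Fin n) =>
        S.card = k ∧ IsIndepFinset (graphOf n ω) S)).card := by
    rw [numIndep, Set.ncard_eq_toFinset_card']
    congr 1
    ext S
    simp
  rw [h1, Finset.card_filter]
  rw [Finset.powersetCard_eq_filter, Finset.powerset_univ]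
  rw [Finset.sum_filter]
  push_cast
  apply Finset.sum_congr rfl
  intro S _
  by_cases hc : S.card = k
  · by_cases hi : IsIndepFinset (graphOf n ω) S
    · have hω : ω ∈ cyl (ES S) := (indep_iff ω S).mp hi
      simp [hc, hi, Set.indicator_of_mem hω]
    · have hω : ω ∉ cyl (ES S) := fun h => hi ((indep_iff ω S).mpr h)
      simp [hc, hi, Set.indicator_of_notMem hω]
  · simp [hc]

lemma X_measurable (n k : ℕ) :
    Measurable (fun ω => (numIndep n k ω : ℝ)) := by
  have : (fun ω => (numIndep n k ω : ℝ)) =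
      (fun ω => ∑ S ∈ Finset.powersetCard k (Finset.univ : Finset (Fin n)),
        (cyl (ES S)).indicator (fun _ => (1:ℝ)) ω) := by
    funext ω; exact numIndep_eq n k ω
  rw [this]
  exact Finset.measurable_sum _ (fun S _ => (measurable_const).indicator (cyl_meas _))

lemma EX (n k : ℕ) :
    ∫ ω, (numIndep n k ω : ℝ) ∂ erdosRenyi n (1/2) =
      (n.choose k : ℝ) * (2:ℝ)^(-(k.choose 2 : ℤ)) := by
  classical
  rw [show (fun ω => (numIndep n k ω : ℝ)) = fun ω =>
      ∑ S ∈ Finset.powersetCard k (Finset.univ : Finset (Fin n)),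
        (cyl (ES S)).indicator (fun _ => (1:ℝ)) ω from funext (numIndep_eq n k)]
  rw [integral_finset_sum]
  · have : ∀ S ∈ Finset.powersetCard k (Finset.univ : Finset (Fin n)),
        ∫ ω, (cyl (ES S)).indicator (fun _ => (1:ℝ)) ω ∂ erdosRenyi n (1/2) =
        (2:ℝ)^(-(k.choose 2 : ℤ)) := by
      intro S hS
      rw [integral_indicator_const (1:ℝ) (cyl_meas _), smul_eq_mul, mul_one,
        measureReal_def, cyl_measure_real, ES_card]
      rw [(Finset.mem_powersetCard.mp hS).2]
    rw [Finset.sum_congr rfl this, Finset.sum_const, Finset.card_powersetCard,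
      Finset.card_univ, Fintype.card_fin, nsmul_eq_mul]
  · intro S _
    exact (integrable_const (1:ℝ)).indicator (cyl_meas _)

lemma sq_expand (n k : ℕ) (ω : Sym2 (Fin n) → Bool) :
    (numIndep n k ω : ℝ)^2 = ∑ S ∈ Finset.powersetCard k (Finset.univ : Finset (Fin n)),
      ∑ T ∈ Finset.powersetCard k (Finset.univ : Finset (Fin n)),
        (cyl (ES S ∪ ES T)).indicator (fun _ => (1:ℝ)) ω := by
  rw [sq, numIndep_eq, Finset.sum_mul_sum]
  apply Finset.sum_congr rfl
  intro S _
  apply Finset.sum_congr rfl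
  intro T _
  rw [← cyl_inter]
  by_cases h1 : ω ∈ cyl (ES S) <;> by_cases h2 : ω ∈ cyl (ES T) <;>
    simp [Set.indicator_apply, h1, h2]

lemma EX2 (n k : ℕ) :
    ∫ ω, (numIndep n k ω : ℝ)^2 ∂ erdosRenyi n (1/2) =
      ∑ S ∈ Finset.powersetCard k (Finset.univ : Finset (Fin n)),
        ∑ T ∈ Finset.powersetCard k (Finset.univ : Finset (Fin n)),
          (2:ℝ)^(-(((ES S ∪ ES T).card):ℤ)) := by
  rw [show (fun ω => (numIndep n k ω : ℝ)^2) = fun ω =>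
      ∑ S ∈ Finset.powersetCard k (Finset.univ : Finset (Fin n)),
        ∑ T ∈ Finset.powersetCard k (Finset.univ : Finset (Fin n)),
          (cyl (ES S ∪ ES T)).indicator (fun _ => (1:ℝ)) ω from funext (sq_expand n k)]
  rw [integral_finset_sum _ (fun S _ => integrable_finset_sum _
    (fun T _ => (integrable_const (1:ℝ)).indicator (cyl_meas _)))]
  apply Finset.sum_congr rfl
  intro S _
  rw [integral_finset_sum _ (fun T _ => (integrable_const (1:ℝ)).indicator (cyl_meas _))]
  apply Finset.sum_congr rfl
  intro T _
  rw [integral_indicator_const (1:ℝ) (cyl_meas _), smul_eq_mul, mul_one, measureReal_def, cyl_measure_real]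

lemma count_pairs (n k i : ℕ) (S : Finset (Fin n)) :
    ((Finset.powersetCard k (Finset.univ : Finset (Fin n))).filter
      (fun T => (S ∩ T).card = i)).card ≤ S.card.choose i * (n - S.card).choose (k - i) := by
  classical
  have key : ((Finset.powersetCard k (Finset.univ : Finset (Fin n))).filter
      (fun T => (S ∩ T).card = i)).card ≤
      ((S.powersetCard i) ×ˢ ((Finset.univ \ S).powersetCard (k - i))).card := by
    apply Finset.card_le_card_of_injOn (fun T => (S ∩ T, T \ S))
    · intro T hT
      rw [Finset.mem_coe, Finset.mem_filter, Finset.mem_powersetCard] at hT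
      obtain ⟨⟨_, hTk⟩, hTi⟩ := hT
      rw [Finset.mem_coe, Finset.mem_product, Finset.mem_powersetCard, Finset.mem_powersetCard]
      have hc : (T ∩ S).card + (T \ S).card = T.card := Finset.card_inter_add_card_sdiff T S
      rw [Finset.inter_comm T S] at hc
      have hTS : (T \ S).card = k - i := by omega
      refine ⟨⟨Finset.inter_subset_left, hTi⟩, ⟨?_, hTS⟩⟩
      intro x hx
      rw [Finset.mem_sdiff] at hx ⊢
      exact ⟨Finset.mem_univ x, hx.2⟩
    · intro T1 h1 T2 h2 heq
      simp only [Prod.mk.injEq] at heq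
      have hrec : ∀ T : Finset (Fin n), (S ∩ T) ∪ (T \ S) = T := by
        intro T; ext x
        simp only [Finset.mem_union, Finset.mem_inter, Finset.mem_sdiff]
        tauto
      rw [← hrec T1, ← hrec T2, heq.1, heq.2]
  rw [Finset.card_product, Finset.card_powersetCard, Finset.card_powersetCard,
    Finset.card_sdiff_of_subset (Finset.subset_univ S), Finset.card_univ, Fintype.card_fin] at key
  exact key

lemma pair_bound (n k : ℕ) (S T : Finset (Fin n)) (hS : S.card = k) (hT : T.card = k) :
    (2:ℝ)^(-(((ES S ∪ ES T).card):ℤ)) - (2:ℝ)^(-(2*(k.choose 2):ℤ)) ≤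
      (2:ℝ)^(-(2*(k.choose 2):ℤ) + (((S∩T).card).choose 2:ℤ)) -
        (2:ℝ)^(-(2*(k.choose 2):ℤ)) := by
  apply sub_le_sub_right
  apply zpow_le_zpow_right₀ (by norm_num : (1:ℝ) ≤ 2)
  have h1 : (ES S ∪ ES T).card + (ES S ∩ ES T).card = 2 * k.choose 2 := by
    rw [Finset.card_union_add_card_inter, ES_card, ES_card, hS, hT]; ring
  have h2 : (ES S ∩ ES T).card ≤ ((S∩T).card).choose 2 := by
    rw [← ES_card]; exact Finset.card_le_card (ES_inter S T)
  omega

lemma var_bound (n k : ℕ) (hk4 : 4 ≤ k) :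
    variance (fun ω => (numIndep n k ω : ℝ)) (erdosRenyi n (1/2)) ≤
      f n k + ∑ i ∈ Finset.Icc 2 (k-1), fi n k i := by
  classical
  set 𝒮 := Finset.powersetCard k (Finset.univ : Finset (Fin n)) with h𝒮
  set μ := erdosRenyi n (1/2)
  set g : ℕ → ℝ := fun i =>
    (2:ℝ)^(-(2*(k.choose 2):ℤ) + (i.choose 2:ℤ)) - (2:ℝ)^(-(2*(k.choose 2):ℤ)) with hg
  have gnonneg : ∀ i, 0 ≤ g i := by
    intro i
    apply sub_nonneg.mpr
    apply zpow_le_zpow_right₀ (by norm_num : (1:ℝ) ≤ 2)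
    have : (0:ℤ) ≤ (i.choose 2:ℤ) := Int.ofNat_nonneg _
    omega
  -- Memℒp
  have hb : ∀ ω, ‖(numIndep n k ω:ℝ)‖ ≤ (𝒮.card : ℝ) := by
    intro ω
    rw [Real.norm_eq_abs, numIndep_eq]
    calc |∑ S ∈ 𝒮, (cyl (ES S)).indicator (fun _ => (1:ℝ)) ω|
        ≤ ∑ S ∈ 𝒮, |(cyl (ES S)).indicator (fun _ => (1:ℝ)) ω| :=
          Finset.abs_sum_le_sum_abs _ _
      _ ≤ ∑ S ∈ 𝒮, 1 := by
          apply Finset.sum_le_sum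
          intro S _
          rw [Set.indicator_apply]
          split <;> simp
      _ = (𝒮.card : ℝ) := by rw [Finset.sum_const, nsmul_eq_mul, mul_one]
  have hL : MemLp (fun ω => (numIndep n k ω:ℝ)) 2 μ :=
    MemLp.of_bound (X_measurable n k).aestronglyMeasurable _ (Eventually.of_forall hb)
  rw [variance_eq_sub hL]
  have hXsq : (fun ω => (numIndep n k ω:ℝ))^2 = fun ω => (numIndep n k ω:ℝ)^2 := rfl
  rw [hXsq]
  show (∫ ω, (numIndep n k ω : ℝ)^2 ∂ μ) - (∫ ω, (numIndep n k ω : ℝ) ∂ μ)^2 ≤ _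
  rw [EX2, EX]
  -- rewrite (EX)^2 as a double sum
  have hsq : ((n.choose k:ℝ) * (2:ℝ)^(-(k.choose 2 : ℤ)))^2 =
      ∑ S ∈ 𝒮, ∑ T ∈ 𝒮, (2:ℝ)^(-(2*(k.choose 2):ℤ)) := by
    rw [Finset.sum_const, Finset.sum_const, Finset.card_powersetCard, Finset.card_univ,
      Fintype.card_fin, nsmul_eq_mul, nsmul_eq_mul]
    have h2 : (2:ℝ)^(-(2*(k.choose 2):ℤ)) =
        (2:ℝ)^(-(k.choose 2 : ℤ)) * (2:ℝ)^(-(k.choose 2 : ℤ)) := by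
      rw [← zpow_add₀ (by norm_num : (2:ℝ) ≠ 0)]
      congr 1; ring
    rw [h2]; ring
  rw [hsq, ← Finset.sum_sub_distrib]
  have hstep1 : ∀ S ∈ 𝒮,
      (∑ T ∈ 𝒮, (2:ℝ)^(-(((ES S ∪ ES T).card):ℤ))) - ∑ T ∈ 𝒮, (2:ℝ)^(-(2*(k.choose 2):ℤ))
      ≤ ∑ i ∈ Finset.range (k+1), (k.choose i * (n-k).choose (k-i) : ℝ) * g i := by
    intro S hS
    have hSk : S.card = k := (Finset.mem_powersetCard.mp hS).2
    rw [← Finset.sum_sub_distrib]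
    have h1 : ∑ T ∈ 𝒮, ((2:ℝ)^(-(((ES S ∪ ES T).card):ℤ)) - (2:ℝ)^(-(2*(k.choose 2):ℤ)))
        ≤ ∑ T ∈ 𝒮, g ((S ∩ T).card) := by
      apply Finset.sum_le_sum
      intro T hT
      exact pair_bound n k S T hSk (Finset.mem_powersetCard.mp hT).2
    refine le_trans h1 ?_
    -- group by fiber
    rw [Finset.sum_comp (g) (fun T => (S ∩ T).card)]
    have himg : 𝒮.image (fun T => (S ∩ T).card) ⊆ Finset.range (k+1) := by
      intro i hi
      rw [Finset.mem_image] at hi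
      obtain ⟨T, hT, rfl⟩ := hi
      rw [Finset.mem_range]
      have : (S ∩ T).card ≤ T.card := Finset.card_le_card Finset.inter_subset_right
      have := (Finset.mem_powersetCard.mp hT).2
      omega
    rw [Finset.sum_subset himg ?hzero]
    case hzero =>
      intro i _ hni
      have : (𝒮.filter (fun T => (S ∩ T).card = i)) = ∅ := by
        rw [Finset.filter_eq_empty_iff]
        intro T hT heq
        exact hni (Finset.mem_image.mpr ⟨T, hT, heq⟩)
      rw [this]; simp
    apply Finset.sum_le_sum
    intro i _
    rw [nsmul_eq_mul]
    apply mul_le_mul_of_nonneg_right _ (gnonneg i)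
    calc ((𝒮.filter (fun T => (S ∩ T).card = i)).card : ℝ)
        ≤ (S.card.choose i * (n - S.card).choose (k - i) : ℕ) := by
          exact_mod_cast count_pairs n k i S
      _ = (k.choose i * (n-k).choose (k-i) : ℝ) := by rw [hSk]; push_cast; ring
  have hstep2 : ∑ S ∈ 𝒮, ((∑ T ∈ 𝒮, (2:ℝ)^(-(((ES S ∪ ES T).card):ℤ))) -
        ∑ T ∈ 𝒮, (2:ℝ)^(-(2*(k.choose 2):ℤ)))
      ≤ (n.choose k : ℝ) * ∑ i ∈ Finset.range (k+1),
          (k.choose i * (n-k).choose (k-i) : ℝ) * g i := by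
    calc ∑ S ∈ 𝒮, ((∑ T ∈ 𝒮, (2:ℝ)^(-(((ES S ∪ ES T).card):ℤ))) -
          ∑ T ∈ 𝒮, (2:ℝ)^(-(2*(k.choose 2):ℤ)))
        ≤ ∑ _S ∈ 𝒮, ∑ i ∈ Finset.range (k+1),
            (k.choose i * (n-k).choose (k-i) : ℝ) * g i := Finset.sum_le_sum hstep1
      _ = (n.choose k : ℝ) * ∑ i ∈ Finset.range (k+1),
            (k.choose i * (n-k).choose (k-i) : ℝ) * g i := by
          rw [Finset.sum_const, Finset.card_powersetCard, Finset.card_univ,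
            Fintype.card_fin, nsmul_eq_mul]
  refine le_trans (by convert hstep2 using 2 <;> rw [Finset.sum_sub_distrib]) ?_
  -- final splitting
  have hfin : (n.choose k : ℝ) * ∑ i ∈ Finset.range (k+1),
      (k.choose i * (n-k).choose (k-i) : ℝ) * g i ≤
      f n k + ∑ i ∈ Finset.Icc 2 (k-1), fi n k i := by
    rw [Finset.sum_range_succ]
    have hlast : (k.choose k * (n-k).choose (k-k) : ℝ) * g k ≤ (2:ℝ)^(-(k.choose 2:ℤ)) := by
      rw [Nat.choose_self, Nat.sub_self, Nat.choose_zero_right]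
      push_cast
      rw [one_mul, one_mul]
      calc g k = (2:ℝ)^(-(2*(k.choose 2):ℤ) + (k.choose 2:ℤ)) -
            (2:ℝ)^(-(2*(k.choose 2):ℤ)) := rfl
        _ ≤ (2:ℝ)^(-(2*(k.choose 2):ℤ) + (k.choose 2:ℤ)) := by
            have : (0:ℝ) ≤ (2:ℝ)^(-(2*(k.choose 2):ℤ)) := by positivity
            linarith
        _ = (2:ℝ)^(-(k.choose 2:ℤ)) := by congr 1; ring
    have hmid : ∑ i ∈ Finset.range k, (k.choose i * (n-k).choose (k-i) : ℝ) * g i =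
        ∑ i ∈ Finset.Ico 0 2, (k.choose i * (n-k).choose (k-i) : ℝ) * g i +
        ∑ i ∈ Finset.Ico 2 k, (k.choose i * (n-k).choose (k-i) : ℝ) * g i := by
      rw [Finset.range_eq_Ico, ← Finset.sum_Ico_consecutive _ (by omega : 0 ≤ 2) (by omega : 2 ≤ k)]
    have hzero2 : ∑ i ∈ Finset.Ico 0 2, (k.choose i * (n-k).choose (k-i) : ℝ) * g i = 0 := by
      have hg0 : g 0 = 0 := by
        show (2:ℝ)^(-(2*(k.choose 2):ℤ) + ((Nat.choose 0 2 : ℕ):ℤ)) -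
          (2:ℝ)^(-(2*(k.choose 2):ℤ)) = 0
        norm_num
      have hg1 : g 1 = 0 := by
        show (2:ℝ)^(-(2*(k.choose 2):ℤ) + ((Nat.choose 1 2 : ℕ):ℤ)) -
          (2:ℝ)^(-(2*(k.choose 2):ℤ)) = 0
        norm_num
      apply Finset.sum_eq_zero
      intro i hi
      rw [Finset.mem_Ico] at hi
      obtain ⟨_, hi2⟩ := hi
      interval_cases i
      · rw [hg0, mul_zero]
      · rw [hg1, mul_zero]
    have hIcoIcc : Finset.Ico 2 k = Finset.Icc 2 (k-1) := by
      rw [← Finset.Ico_add_one_right_eq_Icc]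
      congr 1; omega
    have hmain : (n.choose k : ℝ) * ∑ i ∈ Finset.Ico 2 k,
        (k.choose i * (n-k).choose (k-i) : ℝ) * g i ≤ ∑ i ∈ Finset.Icc 2 (k-1), fi n k i := by
      rw [hIcoIcc, Finset.mul_sum]
      apply Finset.sum_le_sum
      intro i _
      rw [fi, hg]
      have hnn : (0:ℝ) ≤ (n.choose k : ℝ) * (k.choose i * (n-k).choose (k-i) : ℝ) := by
        positivity
      calc (n.choose k : ℝ) * ((k.choose i * (n-k).choose (k-i) : ℝ) *
            ((2:ℝ)^(-(2*(k.choose 2):ℤ) + (i.choose 2:ℤ)) - (2:ℝ)^(-(2*(k.choose 2):ℤ))))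
          ≤ (n.choose k : ℝ) * ((k.choose i * (n-k).choose (k-i) : ℝ) *
            (2:ℝ)^(-(2*(k.choose 2):ℤ) + (i.choose 2:ℤ))) := by
            apply mul_le_mul_of_nonneg_left _ (Nat.cast_nonneg _)
            apply mul_le_mul_of_nonneg_left _ (by positivity)
            have : (0:ℝ) ≤ (2:ℝ)^(-(2*(k.choose 2):ℤ)) := by positivity
            linarith
        _ = (n.choose k : ℝ) * (k.choose i : ℝ) * ((n - k).choose (k - i) : ℝ) *
            (2:ℝ)^(-(2*(k.choose 2):ℤ) + (i.choose 2:ℤ)) := by ring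
    calc (n.choose k : ℝ) * (∑ i ∈ Finset.range k,
          (k.choose i * (n-k).choose (k-i) : ℝ) * g i +
          (k.choose k * (n-k).choose (k-k) : ℝ) * g k)
        = (n.choose k : ℝ) * ∑ i ∈ Finset.Ico 2 k,
            (k.choose i * (n-k).choose (k-i) : ℝ) * g i +
          (n.choose k : ℝ) * ((k.choose k * (n-k).choose (k-k) : ℝ) * g k) := by
          rw [hmid, hzero2]; ring
      _ ≤ ∑ i ∈ Finset.Icc 2 (k-1), fi n k i + f n k := by
          apply add_le_add hmain
          rw [f]
          exact mul_le_mul_of_nonneg_left hlast (Nat.cast_nonneg _)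
      _ = f n k + ∑ i ∈ Finset.Icc 2 (k-1), fi n k i := by ring
  exact hfin

set_option maxHeartbeats 1000000 in
lemma part2 : ∀ ε : ℝ, 0 < ε → ∀ c0 : ℝ, 0 < c0 → ∃ N' : ℕ, ∀ n : ℕ, N' ≤ n → ∀ k : ℕ,
    (1 - (1/100:ℝ)) * (2 * Real.logb 2 n) ≤ (k : ℝ) →
    (k : ℝ) ≤ (1 + (1/100:ℝ)) * (2 * Real.logb 2 n) →
    c0 ≤ f n k →
    (∑ i ∈ Finset.Icc 2 (k - 1), fi n k i) ≤ ε * f n k ^ 2 ∧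
    variance (fun ω => (numIndep n k ω : ℝ)) (erdosRenyi n (1/2)) ≤
      (∫ ω, (numIndep n k ω : ℝ) ∂ erdosRenyi n (1/2)) +
        ε * (∫ ω, (numIndep n k ω : ℝ) ∂ erdosRenyi n (1/2)) ^ 2 := by
  intro ε hε c0 hc0
  obtain ⟨N1, hN1⟩ := part1
  obtain ⟨N2, hN2⟩ := eventual_facts
  obtain ⟨N3, hN3⟩ := Filter.eventually_atTop.1 (rpow_event ((1+1/c0)/ε) 0.29 (by norm_num))
  refine ⟨max N1 (max N2 N3), fun n hn k hk1 hk2 hc0f => ?_⟩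
  have hn1 : N1 ≤ n := le_trans (le_max_left _ _) hn
  have hn2 : N2 ≤ n := le_trans (le_trans (le_max_left _ _) (le_max_right _ _)) hn
  have hn3 : N3 ≤ n := le_trans (le_trans (le_max_right _ _) (le_max_right _ _)) hn
  obtain ⟨ha, hbb⟩ := hN1 n hn1 k hk1 hk2
  have hfacts := hN2 n hn2
  obtain ⟨hkub, h4k, hk4, _, _⟩ := k_facts n k hfacts hk1 hk2
  have hn8 : (8:ℝ) ≤ n := hfacts.1
  have hn0 : (0:ℝ) < n := by linarith
  have hn1' : (1:ℝ) ≤ n := by linarith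
  have hf0 : (0:ℝ) < f n k := lt_of_lt_of_le hc0 hc0f
  have hrp : (1+1/c0) ≤ ε * (n:ℝ)^(0.29:ℝ) := by
    have h := hN3 n hn3
    rw [div_le_iff₀ hε] at h
    linarith
  set M : ℝ := (n:ℝ)^(-(0.6:ℝ)) + (n:ℝ)^(-(0.3:ℝ))/c0 with hM
  have hM0 : 0 ≤ M := by positivity
  have hterm : ∀ i ∈ Finset.Icc 2 (k-1), fi n k i ≤ f n k^2 * M := by
    intro i hi
    rw [Finset.mem_Icc] at hi
    obtain ⟨hi2, hik1⟩ := hi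
    have hik : i ≤ k := by omega
    by_cases hcase : (i:ℝ) ≤ 2*k/3
    · have h1 := ha i hi2 hcase
      have h2 : (n:ℝ)^(-(0.3:ℝ)*i) ≤ (n:ℝ)^(-(0.6:ℝ)) := by
        apply Real.rpow_le_rpow_of_exponent_le hn1'
        have : (2:ℝ) ≤ i := by exact_mod_cast hi2
        nlinarith
      have h4 : (0:ℝ) ≤ (n:ℝ)^(-(0.3:ℝ))/c0 := by positivity
      calc fi n k i ≤ f n k^2 * (n:ℝ)^(-(0.3:ℝ)*i) := h1
        _ ≤ f n k^2 * (n:ℝ)^(-(0.6:ℝ)) := mul_le_mul_of_nonneg_left h2 (by positivity)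
        _ ≤ f n k^2 * M := by
            rw [hM, mul_add]
            have := mul_nonneg (sq_nonneg (f n k)) h4
            linarith
    · set j := k - i with hj
      have hj1 : 1 ≤ j := by omega
      have hjc : (j:ℝ) = (k:ℝ) - i := by rw [hj]; push_cast [Nat.cast_sub hik]; ring
      have hj3 : (j:ℝ) ≤ (k:ℝ)/3 := by
        rw [hjc]
        have := not_le.mp hcase
        linarith
      have h1 := hbb j hj1 hj3
      have hkj : k - j = i := by omega
      rw [hkj] at h1
      have h2 : (n:ℝ)^(-(0.3:ℝ)*j) ≤ (n:ℝ)^(-(0.3:ℝ)) := by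
        apply Real.rpow_le_rpow_of_exponent_le hn1'
        have : (1:ℝ) ≤ j := by exact_mod_cast hj1
        nlinarith
      have h3 : f n k ≤ f n k^2 / c0 := by
        rw [le_div_iff₀ hc0]
        nlinarith
      have h4 : (0:ℝ) ≤ (n:ℝ)^(-(0.6:ℝ)) := by positivity
      calc fi n k i ≤ f n k * (n:ℝ)^(-(0.3:ℝ)*j) := h1
        _ ≤ f n k * (n:ℝ)^(-(0.3:ℝ)) := mul_le_mul_of_nonneg_left h2 (le_of_lt hf0)
        _ ≤ (f n k^2/c0) * (n:ℝ)^(-(0.3:ℝ)) := mul_le_mul_of_nonneg_right h3 (by positivity)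
        _ = f n k^2 * ((n:ℝ)^(-(0.3:ℝ))/c0) := by ring
        _ ≤ f n k^2 * M := by
            rw [hM, mul_add]
            have := mul_nonneg (sq_nonneg (f n k)) h4
            linarith
  have hkM : (k:ℝ) * M ≤ ε := by
    have e1 : (k:ℝ)*M ≤ (n:ℝ)^(0.01:ℝ) * M := mul_le_mul_of_nonneg_right hkub hM0
    have e2 : (n:ℝ)^(0.01:ℝ) * M = (n:ℝ)^(-(0.59:ℝ)) + (n:ℝ)^(-(0.29:ℝ))/c0 := by
      rw [hM, mul_add, ← Real.rpow_add hn0, ← mul_div_assoc, ← Real.rpow_add hn0]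
      norm_num
    have e3 : (n:ℝ)^(-(0.59:ℝ)) ≤ (n:ℝ)^(-(0.29:ℝ)) :=
      Real.rpow_le_rpow_of_exponent_le hn1' (by norm_num)
    have e5 : (n:ℝ)^(-(0.29:ℝ)) * (1+1/c0) ≤ (n:ℝ)^(-(0.29:ℝ)) * (ε * (n:ℝ)^(0.29:ℝ)) :=
      mul_le_mul_of_nonneg_left hrp (by positivity)
    have e6 : (n:ℝ)^(-(0.29:ℝ)) * (ε * (n:ℝ)^(0.29:ℝ)) = ε := by
      rw [show (n:ℝ)^(-(0.29:ℝ)) * (ε * (n:ℝ)^(0.29:ℝ)) =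
        ε * ((n:ℝ)^(-(0.29:ℝ)) * (n:ℝ)^(0.29:ℝ)) by ring, ← Real.rpow_add hn0]
      norm_num
    calc (k:ℝ)*M ≤ (n:ℝ)^(0.01:ℝ)*M := e1
      _ = (n:ℝ)^(-(0.59:ℝ)) + (n:ℝ)^(-(0.29:ℝ))/c0 := e2
      _ ≤ (n:ℝ)^(-(0.29:ℝ)) + (n:ℝ)^(-(0.29:ℝ))/c0 := by linarith
      _ = (n:ℝ)^(-(0.29:ℝ)) * (1+1/c0) := by ring
      _ ≤ (n:ℝ)^(-(0.29:ℝ)) * (ε * (n:ℝ)^(0.29:ℝ)) := e5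
      _ = ε := e6
  have hsum : (∑ i ∈ Finset.Icc 2 (k-1), fi n k i) ≤ ε * f n k^2 := by
    calc (∑ i ∈ Finset.Icc 2 (k-1), fi n k i)
        ≤ (Finset.Icc 2 (k-1)).card • (f n k^2 * M) := Finset.sum_le_card_nsmul _ _ _ hterm
      _ = ((Finset.Icc 2 (k-1)).card : ℝ) * (f n k^2 * M) := by rw [nsmul_eq_mul]
      _ ≤ (k:ℝ) * (f n k^2 * M) := by
          apply mul_le_mul_of_nonneg_right _ (by positivity)
          have : (Finset.Icc 2 (k-1)).card ≤ k := by rw [Nat.card_Icc]; omega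
          exact_mod_cast this
      _ = f n k^2 * ((k:ℝ)*M) := by ring
      _ ≤ f n k^2 * ε := mul_le_mul_of_nonneg_left hkM (by positivity)
      _ = ε * f n k^2 := by ring
  refine ⟨hsum, ?_⟩
  have hvar := var_bound n k hk4
  rw [EX n k]
  have hfold : (n.choose k:ℝ) * (2:ℝ)^(-(k.choose 2 : ℤ)) = f n k := rfl
  rw [hfold]
  nlinarith [hvar, hsum]

/-- Lemma 2.1: bounds on `f_i` for `k = (1+o(1))·2log₂ n`, and the resulting
variance bound for the number `X` of independent sets of size `k` in `G(n,1/2)`. -/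
theorem fi_bounds_and_variance :
    ∃ δ : ℝ, 0 < δ ∧
      (∃ N : ℕ, ∀ n : ℕ, N ≤ n → ∀ k : ℕ,
        (1 - δ) * (2 * Real.logb 2 n) ≤ (k : ℝ) →
        (k : ℝ) ≤ (1 + δ) * (2 * Real.logb 2 n) →
        (∀ i : ℕ, 2 ≤ i → (i : ℝ) ≤ 2 * k / 3 →
          fi n k i ≤ f n k ^ 2 * (n : ℝ) ^ (-(0.3 : ℝ) * i)) ∧
        (∀ j : ℕ, 1 ≤ j → (j : ℝ) ≤ (k : ℝ) / 3 →
          fi n k (k - j) ≤ f n k * (n : ℝ) ^ (-(0.3 : ℝ) * j))) ∧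
      (∀ ε : ℝ, 0 < ε → ∀ c0 : ℝ, 0 < c0 → ∃ N' : ℕ, ∀ n : ℕ, N' ≤ n → ∀ k : ℕ,
        (1 - δ) * (2 * Real.logb 2 n) ≤ (k : ℝ) →
        (k : ℝ) ≤ (1 + δ) * (2 * Real.logb 2 n) →
        c0 ≤ f n k →
        (∑ i ∈ Finset.Icc 2 (k - 1), fi n k i) ≤ ε * f n k ^ 2 ∧
        variance (fun ω => (numIndep n k ω : ℝ)) (erdosRenyi n (1/2)) ≤
          (∫ ω, (numIndep n k ω : ℝ) ∂ erdosRenyi n (1/2)) +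
            ε * (∫ ω, (numIndep n k ω : ℝ) ∂ erdosRenyi n (1/2)) ^ 2) := by
  refine ⟨1/100, by norm_num, ?_, ?_⟩
  · obtain ⟨N, hN⟩ := part1
    exact ⟨N, hN⟩
  · exact part2


end RandomBipartiteDecomposition
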